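/- arXiv:2506.15335 — 3 statements merged into one kernel-verified Lean document; each statement's English description precedes it below -/
import Mathlib

section
/- Let n be even and λ a partition of n/2 of length l. Suppose {λ,+} (or {λ,−}) covers Θ in the poset (𝒟_n, ⊴_D), i.e. Θ is strictly below {λ,±} and no element of 𝒟_n lies strictly between them. Then there exists an integer 1 ≤ p ≤ l with λ_p > λ_{p+1} such that Θ = {θ, ω}, where θ = (λ₁,…,λ_{p−1}, λ_p − 1, λ_{p+1},…,λ_l) and ω = (λ₁,…,λ_p, λ_{p+1} + 1, λ_{p+2},…,λ_l). In particular, Θ is an unordered pair of two distinct partitions. -/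
open MvPolynomial

/-- `l` is (the list of parts of) a partition: weakly decreasing positive entries. -/
def IsPtn (l : List ℕ) : Prop := l.Pairwise (· ≥ ·) ∧ ∀ x ∈ l, 0 < x

/-- `(i, c)` (row `i`, column `c`, both 0-indexed) is a cell of the Young diagram of `l`. -/
def IsCell (l : List ℕ) (p : ℕ × ℕ) : Prop := p.2 < l.getD p.1 0

/-- Length of column `c` (0-indexed) of the Young diagram of `l`. -/
def colLen (l : List ℕ) (c : ℕ) : ℕ := l.countP fun x => decide (c < x)

/-- `(tT, tS)` is a bitableau of shape `(l, m)`: a filling of the two Young diagrams with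
the integers `Fin n`, each occurring exactly once. -/
def IsBitableau (n : ℕ) (l m : List ℕ) (tT tS : ℕ × ℕ → Fin n) : Prop :=
  (∀ p q, IsCell l p → IsCell l q → tT p = tT q → p = q) ∧
  (∀ p q, IsCell m p → IsCell m q → tS p = tS q → p = q) ∧
  (∀ p q, IsCell l p → IsCell m q → tT p ≠ tS q) ∧
  ∀ k : Fin n, (∃ p, IsCell l p ∧ tT p = k) ∨ (∃ p, IsCell m p ∧ tS p = k)

/-- The `S`-Specht polynomial of the tableau `t` of shape `l`, evaluated at the squared
variables: the product over all columns of the Vandermonde determinant of the squares of the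
variables indexed by the column entries. -/
noncomputable def speSsq (K : Type*) [CommRing K] (n : ℕ) (l : List ℕ) (t : ℕ × ℕ → Fin n) :
    MvPolynomial (Fin n) K :=
  ∏ c ∈ Finset.range (l.getD 0 0), ∏ i ∈ Finset.range (colLen l c),
    ∏ j ∈ Finset.range (colLen l c),
      if i < j then X (t (i, c)) ^ 2 - X (t (j, c)) ^ 2 else 1

/-- The product of the variables indexed by the entries of a tableau of shape `l`. -/
noncomputable def prodVars (K : Type*) [CommRing K] (n : ℕ) (l : List ℕ) (t : ℕ × ℕ → Fin n) :
    MvPolynomial (Fin n) K :=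
  ∏ c ∈ Finset.range (l.getD 0 0), ∏ i ∈ Finset.range (colLen l c), X (t (i, c))

/-- The `B`-Specht polynomial of the bitableau `(tT, tS)` of shape `(l, m)`. -/
noncomputable def speB (K : Type*) [CommRing K] (n : ℕ) (l m : List ℕ)
    (tT tS : ℕ × ℕ → Fin n) : MvPolynomial (Fin n) K :=
  speSsq K n l tT * speSsq K n m tS * prodVars K n m tS

/-- The `D`-Specht polynomial of a bitableau of shape `(l, l)`; sign `true` is `+`. -/
noncomputable def speD (K : Type*) [CommRing K] (n : ℕ) (sign : Bool) (l : List ℕ)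
    (tT tS : ℕ × ℕ → Fin n) : MvPolynomial (Fin n) K :=
  if sign then speB K n l l tT tS + speB K n l l tS tT
  else speB K n l l tT tS - speB K n l l tS tT

/-- Dipartitions: an unordered pair of partitions, or a partition with a sign
(`true` is `+`, `false` is `−`). -/
inductive Dipart : Type
  | pair (s : Multiset (List ℕ)) : Dipart
  | signed (l : List ℕ) (sign : Bool) : Dipart

/-- A dipartition of `n`: an unordered pair of distinct partitions whose sizes sum to `n`,
or a signed partition of `n/2` (for even `n`). -/
def Dipart.Valid (n : ℕ) : Dipart → Prop
  | .pair s => ∃ l m : List ℕ, s = {l, m} ∧ l ≠ m ∧ IsPtn l ∧ IsPtn m ∧ l.sum + m.sum = n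
  | .signed l _ => IsPtn l ∧ 2 * l.sum = n

/-- The bidominance order on bipartitions: `bidom l m w t` means `(l,m) ⊴_B (w,t)`. -/
def bidom (l m w t : List ℕ) : Prop :=
  ∀ j : ℕ, 1 ≤ j →
    ((l.take j).sum + (m.take j).sum ≤ (w.take j).sum + (t.take j).sum ∧
      l.getD (j - 1) 0 + ((l.take (j - 1)).sum + (m.take (j - 1)).sum)
        ≤ w.getD (j - 1) 0 + ((w.take (j - 1)).sum + (t.take (j - 1)).sum))

/-- `predD l m t w` means `{l,m} ≼_D {t,w}` for unordered pairs of partitions. -/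
def predD (l m t w : List ℕ) : Prop :=
  (bidom l m t w ∨ bidom l m w t) ∧ (bidom m l t w ∨ bidom m l w t)

/-- The didominance relation `⊴_D` on dipartitions. -/
def didom : Dipart → Dipart → Prop
  | .pair s, .pair s' => ∃ l m t w, s = {l, m} ∧ s' = {t, w} ∧ predD l m t w
  | .pair s, .signed l' _ => ∃ l m, s = {l, m} ∧ predD l m l' l'
  | .signed l' _, .pair s => ∃ t w, s = {t, w} ∧ predD l' l' t w
  | .signed l b, .signed m b' => (l = m ∧ b = b') ∨ (l ≠ m ∧ predD l l m m)

/-- The `B`-Specht ideal of shape `(l, m)`. -/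
noncomputable def IdealB (K : Type*) [CommRing K] (n : ℕ) (l m : List ℕ) :
    Ideal (MvPolynomial (Fin n) K) :=
  Ideal.span {f | ∃ tT tS, IsBitableau n l m tT tS ∧ f = speB K n l m tT tS}

/-- The `D`-Specht ideal of a dipartition.  For an unordered pair `{l,m}` it is generated by
all `B`-Specht polynomials of shapes `(l,m)` and `(m,l)`; for a signed partition it is
generated by the `D`-Specht polynomials. -/
noncomputable def IdealD (K : Type*) [CommRing K] (n : ℕ) :
    Dipart → Ideal (MvPolynomial (Fin n) K)
  | .pair s => Ideal.span
      {f | ∃ l m tT tS, s = {l, m} ∧ IsBitableau n l m tT tS ∧ f = speB K n l m tT tS}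
  | .signed lam b => Ideal.span
      {f | ∃ tT tS, IsBitableau n lam lam tT tS ∧ f = speD K n b lam tT tS}

/-- The variety of the `B`-Specht ideal in `Kⁿ`. -/
def varB (K : Type*) [CommRing K] (n : ℕ) (l m : List ℕ) : Set (Fin n → K) :=
  {x | ∀ f ∈ IdealB K n l m, MvPolynomial.eval x f = 0}

/-- The variety of the `D`-Specht ideal in `Kⁿ`. -/
def varD (K : Type*) [CommRing K] (n : ℕ) (d : Dipart) : Set (Fin n → K) :=
  {x | ∀ f ∈ IdealD K n d, MvPolynomial.eval x f = 0}

/-- The signed-permutation action on `K[X₁,…,Xₙ]`: `X i ↦ ε i · X (σ i)`. -/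
noncomputable def dact (K : Type*) [CommRing K] (n : ℕ) (ε : Fin n → ℤˣ)
    (σ : Equiv.Perm (Fin n)) : MvPolynomial (Fin n) K →ₐ[K] MvPolynomial (Fin n) K :=
  MvPolynomial.aeval fun i => ((ε i : ℤ) : MvPolynomial (Fin n) K) * X (σ i)



lemma sum_take_succ' (l : List ℕ) (j : ℕ) : (l.take (j+1)).sum = (l.take j).sum + l.getD j 0 := by
  rcases Nat.lt_or_ge j l.length with h | h
  · rw [List.sum_take_succ l j h, List.getD_eq_getElem l 0 h]
  · rw [List.take_of_length_le h, List.take_of_length_le (by omega), List.getD_eq_default _ _ h]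
    omega

lemma getD_anti (l : List ℕ) (hl : l.Pairwise (· ≥ ·)) {i j : ℕ} (hij : i ≤ j) :
    l.getD j 0 ≤ l.getD i 0 := by
  rcases Nat.lt_or_ge j l.length with h | h
  · rw [List.getD_eq_getElem l 0 h, List.getD_eq_getElem l 0 (lt_of_le_of_lt hij h)]
    rcases Nat.eq_or_lt_of_le hij with rfl | hij'
    · exact le_refl _
    · exact List.pairwise_iff_getElem.mp hl i j _ _ hij'
  · rw [List.getD_eq_default _ _ h]; exact Nat.zero_le _

lemma getD_pos_of_lt {l : List ℕ} (hl : IsPtn l) {j : ℕ} (h : j < l.length) :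
    0 < l.getD j 0 := by
  rw [List.getD_eq_getElem l 0 h]; exact hl.2 _ (List.getElem_mem h)

lemma lt_length_of_getD_pos {l : List ℕ} {j : ℕ} (h : 0 < l.getD j 0) : j < l.length := by
  by_contra hc
  rw [List.getD_eq_default _ _ (by omega)] at h; omega

lemma ptn_ext {a b : List ℕ} (ha : IsPtn a) (hb : IsPtn b)
    (h : ∀ j, a.getD j 0 = b.getD j 0) : a = b := by
  have hlen : a.length = b.length := by
    by_contra hc
    rcases Nat.lt_or_ge a.length b.length with hab | hab
    · have h1 := getD_pos_of_lt hb hab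
      have h2 : a.getD a.length 0 = 0 := List.getD_eq_default _ _ le_rfl
      rw [h a.length] at h2; omega
    · have hba : b.length < a.length := by omega
      have h1 := getD_pos_of_lt ha hba
      have h2 : b.getD b.length 0 = 0 := List.getD_eq_default _ _ le_rfl
      rw [h b.length] at h1; omega
  apply List.ext_getElem hlen
  intro i h1 h2
  have := h i
  rwa [List.getD_eq_getElem a 0 h1, List.getD_eq_getElem b 0 h2] at this




lemma cover_lists (lam : List ℕ) (p : ℕ) (hlam : IsPtn lam) (hp1 : 1 ≤ p)
    (hpL : p ≤ lam.length) (hvw : lam.getD p 0 < lam.getD (p-1) 0)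
    (θ' ω' : List ℕ)
    (hθdef : θ' = (lam.take (p-1) ++ (lam.getD (p-1) 0 - 1) :: lam.drop p).filter
      (fun x => decide (x ≠ 0)))
    (hωdef : ω' = lam.take p ++ (lam.getD p 0 + 1) :: lam.drop (p+1)) :
    IsPtn θ' ∧ IsPtn ω' ∧ θ'.sum + 1 = lam.sum ∧ ω'.sum = lam.sum + 1 ∧
    (∀ j, j < p → (θ'.take j).sum = (lam.take j).sum) ∧
    (∀ j, p ≤ j → (θ'.take j).sum + 1 = (lam.take j).sum) ∧
    (∀ j, j ≤ p → (ω'.take j).sum = (lam.take j).sum) ∧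
    (∀ j, p < j → (ω'.take j).sum = (lam.take j).sum + 1) := by
  set L := lam.length with hL
  set v := lam.getD (p-1) 0 with hv
  set w := lam.getD p 0 with hw
  have hpl : p - 1 < L := by omega
  have hvpos : 0 < v := getD_pos_of_lt hlam hpl
  -- decomposition at p-1
  have hdropA : lam.drop (p-1) = v :: lam.drop p := by
    rw [List.drop_eq_getElem_cons hpl]
    congr 1
    · exact (List.getD_eq_getElem lam 0 hpl).symm
    · congr 1; omega
  have decompA : lam = lam.take (p-1) ++ v :: lam.drop p := by
    conv_lhs => rw [← List.take_append_drop (p-1) lam, hdropA]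
  have hlentake : (lam.take (p-1)).length = p - 1 := by
    rw [List.length_take]; omega
  -- membership positivity
  have hmemtake : ∀ a ∈ lam.take (p-1), 0 < a := fun a ha => hlam.2 a (List.mem_of_mem_take ha)
  have hmemdrop : ∀ a ∈ lam.drop p, 0 < a := fun a ha => hlam.2 a (List.mem_of_mem_drop ha)
  -- sortedness pieces
  have hsorted' : List.Pairwise (· ≥ ·) (lam.take (p-1) ++ v :: lam.drop p) := by
    rw [← decompA]; exact hlam.1
  obtain ⟨hs1, hs2, hs3⟩ := List.pairwise_append.mp hsorted'
  obtain ⟨hvge, hs2'⟩ := List.pairwise_cons.mp hs2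
  have hdrople : ∀ b ∈ lam.drop p, b ≤ w := by
    rcases Nat.lt_or_ge p L with h | h
    · have hdropB : lam.drop p = w :: lam.drop (p+1) := by
        rw [List.drop_eq_getElem_cons h]
        congr 1
        exact (List.getD_eq_getElem lam 0 h).symm
      rw [hdropB]
      intro b hb
      rcases List.mem_cons.mp hb with rfl | hb'
      · exact le_refl _
      · have := List.pairwise_cons.mp (hdropB ▸ hs2')
        exact this.1 b hb'
    · rw [List.drop_eq_nil_of_le (by omega)]
      intro b hb; simp at hb
  -- θ₀ and its properties
  set θ₀ := lam.take (p-1) ++ (v - 1) :: lam.drop p with hθ₀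
  have hθ₀sorted : List.Pairwise (· ≥ ·) θ₀ := by
    rw [hθ₀]
    refine List.pairwise_append.mpr ⟨hs1, ?_, ?_⟩
    · refine List.pairwise_cons.mpr ⟨fun b hb => ?_, hs2'⟩
      have := hdrople b hb; omega
    · intro a ha b hb
      rcases List.mem_cons.mp hb with rfl | hb'
      · have := hs3 a ha v (List.mem_cons_self); omega
      · exact hs3 a ha b (List.mem_cons_of_mem _ hb')
  have hθptn : IsPtn θ' := by
    constructor
    · rw [hθdef]
      exact List.Pairwise.sublist List.filter_sublist hθ₀sorted
    · intro x hx
      rw [hθdef] at hx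
      have := List.of_mem_filter hx
      simp only [decide_eq_true_eq] at this
      omega
  -- ω' sorted and positive
  have htakep : lam.take p = lam.take (p-1) ++ [v] := by
    conv_lhs => rw [decompA]
    rw [List.take_append, hlentake,
      show p - (p-1) = 1 by omega, List.take_take,
      show min p (p-1) = p - 1 by omega]
    rfl
  have htakege : ∀ a ∈ lam.take p, v ≤ a := by
    intro a ha
    rw [htakep] at ha
    rcases List.mem_append.mp ha with h | h
    · exact hs3 a h v (List.mem_cons_self)
    · simp at h; omega
  have hdrop1le : ∀ b ∈ lam.drop (p+1), b ≤ w := by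
    intro b hb
    apply hdrople
    have : lam.drop (p+1) = (lam.drop p).drop 1 := by rw [List.drop_drop]
    rw [this] at hb
    exact (List.drop_sublist 1 (lam.drop p)).subset hb
  have hωptn : IsPtn ω' := by
    constructor
    · rw [hωdef]
      refine List.pairwise_append.mpr ⟨?_, ?_, ?_⟩
      · exact List.Pairwise.sublist (List.take_sublist _ _) hlam.1
      · refine List.pairwise_cons.mpr ⟨fun b hb => ?_, ?_⟩
        · have := hdrop1le b hb; omega
        · exact List.Pairwise.sublist (List.drop_sublist _ _) hlam.1
      · intro a ha b hb
        have hav := htakege a ha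
        rcases List.mem_cons.mp hb with rfl | hb'
        · omega
        · have := hdrop1le b hb'; omega
    · intro x hx
      rw [hωdef] at hx
      rcases List.mem_append.mp hx with h | h
      · exact hlam.2 x (List.mem_of_mem_take h)
      · rcases List.mem_cons.mp h with rfl | h'
        · omega
        · exact hlam.2 x (List.mem_of_mem_drop h')
  -- take-sum computations for θ₀
  have hθ₀take : ∀ j, (θ₀.take j).sum
      = ((lam.take (p-1)).take j).sum + (((v-1) :: lam.drop p).take (j - (p-1))).sum := by
    intro j
    rw [hθ₀, List.take_append, List.sum_append, hlentake]
  have hlamtakeA : ∀ j, (lam.take j).sum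
      = ((lam.take (p-1)).take j).sum + ((v :: lam.drop p).take (j - (p-1))).sum := by
    intro j
    conv_lhs => rw [decompA]
    rw [List.take_append, List.sum_append, hlentake]
  have hG1₀lt : ∀ j, j < p → (θ₀.take j).sum = (lam.take j).sum := by
    intro j hj
    rw [hθ₀take, hlamtakeA, show j - (p-1) = 0 by omega]
    simp
  have hG1₀ge : ∀ j, p ≤ j → (θ₀.take j).sum + 1 = (lam.take j).sum := by
    intro j hj
    rw [hθ₀take, hlamtakeA, show j - (p-1) = (j - p) + 1 by omega,
      List.take_succ_cons, List.take_succ_cons, List.sum_cons, List.sum_cons]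
    omega
  -- filter analysis
  have hG1 : (∀ j, j < p → (θ'.take j).sum = (lam.take j).sum) ∧
      (∀ j, p ≤ j → (θ'.take j).sum + 1 = (lam.take j).sum) := by
    rcases Nat.lt_or_ge 1 v with hv2 | hv1
    · -- v ≥ 2 : filter is identity
      have hfil : θ' = θ₀ := by
        rw [hθdef]
        apply List.filter_eq_self.mpr
        intro a ha
        simp only [decide_eq_true_eq]
        rw [hθ₀] at ha
        rcases List.mem_append.mp ha with h | h
        · have := hmemtake a h; omega
        · rcases List.mem_cons.mp h with rfl | h'
          · omega
          · have := hmemdrop a h'; omega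
    
      rw [hfil]
      exact ⟨hG1₀lt, hG1₀ge⟩
    · -- v = 1, hence w = 0 and p = L
      have hveq : v = 1 := by omega
      have hweq : w = 0 := by omega
      have hpeq : p = L := by
        by_contra hc
        have : p < L := by omega
        have := getD_pos_of_lt hlam this
        omega
      have hdropnil : lam.drop p = [] := by rw [hpeq, hL, List.drop_length]
      have hfil : θ' = lam.take (p-1) := by
        rw [hθdef, hθ₀, hdropnil, hveq, List.filter_append]
        rw [List.filter_eq_self.mpr (by
          intro a ha
          simp only [decide_eq_true_eq]
          have := hmemtake a ha; omega)]
        simp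
      constructor
      · intro j hj
        rw [hfil, List.take_take, show min j (p-1) = j by omega]
      · intro j hj
        have e1 := sum_take_succ' lam (p-1)
        rw [show p - 1 + 1 = p by omega] at e1
        have e3 : lam.take p = lam := List.take_of_length_le (by omega)
        rw [e3] at e1
        have e2 : lam.take j = lam := List.take_of_length_le (by omega)
        rw [hfil, List.take_of_length_le (by rw [hlentake]; omega), e2]
        omega
  -- take-sum computations for ω'
  have hG2 : (∀ j, j ≤ p → (ω'.take j).sum = (lam.take j).sum) ∧
      (∀ j, p < j → (ω'.take j).sum = (lam.take j).sum + 1) := by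
    have hlentakep : (lam.take p).length = p := by rw [List.length_take]; omega
    have hωtake : ∀ j, (ω'.take j).sum
        = ((lam.take p).take j).sum + (((w+1) :: lam.drop (p+1)).take (j - p)).sum := by
      intro j
      rw [hωdef, List.take_append, List.sum_append, hlentakep]
    rcases Nat.lt_or_ge p L with hcase | hcase
    · have hdropB : lam.drop p = w :: lam.drop (p+1) := by
        rw [List.drop_eq_getElem_cons hcase]
        congr 1
        exact (List.getD_eq_getElem lam 0 hcase).symm
      have decompB : lam = lam.take p ++ w :: lam.drop (p+1) := by
        conv_lhs => rw [← List.take_append_drop p lam, hdropB]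
      have hlamtakeB : ∀ j, (lam.take j).sum
          = ((lam.take p).take j).sum + ((w :: lam.drop (p+1)).take (j - p)).sum := by
        intro j
        conv_lhs => rw [decompB]
        rw [List.take_append, List.sum_append, hlentakep]
      constructor
      · intro j hj
        rw [hωtake, hlamtakeB, show j - p = 0 by omega]
        simp
      · intro j hj
        rw [hωtake, hlamtakeB, show j - p = (j - p - 1) + 1 by omega,
          List.take_succ_cons, List.take_succ_cons, List.sum_cons, List.sum_cons]
        omega
    · have hpeq : p = L := by omega
      have hweq : w = 0 := by
        rw [hw]; exact List.getD_eq_default _ _ (by omega)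
      have hdropnil : lam.drop (p+1) = [] := List.drop_eq_nil_of_le (by omega)
      have htakeL : lam.take p = lam := List.take_of_length_le (by omega)
      constructor
      · intro j hj
        rw [hωtake, show j - p = 0 by omega]
        simp only [List.take_zero, List.sum_nil, Nat.add_zero]
        rw [htakeL]
      · intro j hj
        rw [hωtake, hdropnil, show j - p = (j - p - 1) + 1 by omega, List.take_succ_cons,
          List.sum_cons, htakeL, List.take_of_length_le (show lam.length ≤ j by omega)]
        simp [hweq]
  -- total sums
  have hθlen : θ'.length ≤ L := by
    rw [hθdef]
    have h1 := List.length_filter_le (fun x => decide (x ≠ 0)) θ₀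
    have h2 : θ₀.length = L := by
      rw [hθ₀, List.length_append, hlentake, List.length_cons, List.length_drop]
      omega
    omega
  have hωlen : ω'.length ≤ L + 1 := by
    rw [hωdef, List.length_append, List.length_cons, List.length_drop, List.length_take]
    omega
  have hθsum : θ'.sum + 1 = lam.sum := by
    have := hG1.2 (L+1) (by omega)
    rwa [List.take_of_length_le (by omega), List.take_of_length_le (by omega)] at this
  have hωsum : ω'.sum = lam.sum + 1 := by
    have := hG2.2 (L+1) (by omega)
    rwa [List.take_of_length_le (by omega), List.take_of_length_le (by omega)] at this
  exact ⟨hθptn, hωptn, hθsum, hωsum, hG1.1, hG1.2, hG2.1, hG2.2⟩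




section
variable (lam θ' ω' : List ℕ) (p : ℕ)
variable (hG1lt : ∀ j, j < p → (θ'.take j).sum = (lam.take j).sum)
variable (hG1ge : ∀ j, p ≤ j → (θ'.take j).sum + 1 = (lam.take j).sum)
variable (hG2le : ∀ j, j ≤ p → (ω'.take j).sum = (lam.take j).sum)
variable (hG2gt : ∀ j, p < j → (ω'.take j).sum = (lam.take j).sum + 1)

include hG1lt hG1ge hG2le hG2gt

lemma bidom_up1 (hp1 : 1 ≤ p) : bidom θ' ω' lam lam := by
  intro j hj
  have hk : j = (j - 1) + 1 := by omega
  set k := j - 1 with hkdef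
  rw [hk]
  have eθ := sum_take_succ' θ' k
  have el := sum_take_succ' lam k
  constructor
  · rcases Nat.lt_trichotomy (k+1) p with h | h | h
    · have g1 := hG1lt (k+1) h
      have g2 := hG2le (k+1) (by omega)
      omega
    · have g1 := hG1ge (k+1) (by omega)
      have g2 := hG2le (k+1) (by omega)
      omega
    · have g1 := hG1ge (k+1) (by omega)
      have g2 := hG2gt (k+1) h
      omega
  · rcases Nat.lt_trichotomy (k+1) p with h | h | h
    · have g1 := hG1lt k (by omega)
      have g1' := hG1lt (k+1) h
      have g2 := hG2le k (by omega)
      omega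
    · have g1 := hG1lt k (by omega)
      have g1' := hG1ge (k+1) (by omega)
      have g2 := hG2le k (by omega)
      omega
    · have g1 := hG1ge k (by omega)
      have g1' := hG1ge (k+1) (by omega)
      rcases Nat.eq_or_lt_of_le (show p ≤ k by omega) with h2 | h2
      · have g2 := hG2le k (by omega)
        omega
      · have g2 := hG2gt k h2
        omega

lemma bidom_up2 (hp1 : 1 ≤ p) : bidom ω' θ' lam lam := by
  intro j hj
  have hk : j = (j - 1) + 1 := by omega
  set k := j - 1 with hkdef
  rw [hk]
  have eω := sum_take_succ' ω' k
  have el := sum_take_succ' lam k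
  constructor
  · rcases Nat.lt_trichotomy (k+1) p with h | h | h
    · have g1 := hG1lt (k+1) h
      have g2 := hG2le (k+1) (by omega)
      omega
    · have g1 := hG1ge (k+1) (by omega)
      have g2 := hG2le (k+1) (by omega)
      omega
    · have g1 := hG1ge (k+1) (by omega)
      have g2 := hG2gt (k+1) h
      omega
  · rcases Nat.lt_trichotomy (k+1) p with h | h | h
    · have g2 := hG2le k (by omega)
      have g2' := hG2le (k+1) (by omega)
      have g1 := hG1lt k (by omega)
      omega
    · have g2 := hG2le k (by omega)
      have g2' := hG2le (k+1) (by omega)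
      have g1 := hG1lt k (by omega)
      omega
    · rcases Nat.eq_or_lt_of_le (show p ≤ k by omega) with h2 | h2
      · have g2 := hG2le k (by omega)
        have g2' := hG2gt (k+1) h
        have g1 := hG1ge k (by omega)
        omega
      · have g2 := hG2gt k h2
        have g2' := hG2gt (k+1) h
        have g1 := hG1ge k (by omega)
        omega

lemma bidom_dn (α β : List ℕ) (hp1 : 1 ≤ p)
    (hαβ : bidom α β lam lam)
    (hkey : (α.take p).sum + (β.take p).sum + 1 ≤ 2 * (lam.take p).sum) :
    bidom α β ω' θ' := by
  intro j hj
  obtain ⟨he, ho⟩ := hαβ j hj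
  have hk : j = (j - 1) + 1 := by omega
  set k := j - 1 with hkdef
  rw [hk]
  rw [hk] at he
  have eω := sum_take_succ' ω' k
  have el := sum_take_succ' lam k
  constructor
  · rcases Nat.lt_trichotomy (k+1) p with h | h | h
    · have g1 := hG1lt (k+1) h
      have g2 := hG2le (k+1) (by omega)
      omega
    · have g1 := hG1ge (k+1) (by omega)
      have g2 := hG2le (k+1) (by omega)
      have hkp : k + 1 = p := h
      rw [← hkp] at hkey
      omega
    · have g1 := hG1ge (k+1) (by omega)
      have g2 := hG2gt (k+1) h
      omega
  · rcases Nat.lt_trichotomy (k+1) p with h | h | h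
    · have g2 := hG2le k (by omega)
      have g2' := hG2le (k+1) (by omega)
      have g1 := hG1lt k (by omega)
      omega
    · have g2 := hG2le k (by omega)
      have g2' := hG2le (k+1) (by omega)
      have g1 := hG1lt k (by omega)
      omega
    · rcases Nat.eq_or_lt_of_le (show p ≤ k by omega) with h2 | h2
      · have g2 := hG2le k (by omega)
        have g2' := hG2gt (k+1) h
        have g1 := hG1ge k (by omega)
        omega
      · have g2 := hG2gt k h2
        have g2' := hG2gt (k+1) h
        have g1 := hG1ge k (by omega)
        omega

end





lemma descent (lam α β : List ℕ) (hlam : IsPtn lam) (hα : IsPtn α) (hβ : IsPtn β)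
    (hαβ : bidom α β lam lam) (hβα : bidom β α lam lam)
    (hsum2 : α.sum + β.sum = 2 * lam.sum)
    (hne2 : ¬(α = lam ∧ β = lam)) :
    ∃ p, 1 ≤ p ∧ p ≤ lam.length ∧ lam.getD p 0 < lam.getD (p-1) 0 ∧
      (α.take p).sum + (β.take p).sum + 1 ≤ 2 * (lam.take p).sum := by
  set S : ℕ → ℤ := fun j => ((lam.take j).sum : ℤ) with hS
  set A : ℕ → ℤ := fun j => ((α.take j).sum : ℤ) with hA
  set B : ℕ → ℤ := fun j => ((β.take j).sum : ℤ) with hB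
  set s : ℕ → ℤ := fun j => 2 * S j - A j - B j with hs
  -- basic facts
  have hrecS : ∀ j, S (j+1) = S j + (lam.getD j 0 : ℤ) := by
    intro j; simp only [hS, sum_take_succ']; omega
  have hrecA : ∀ j, A (j+1) = A j + (α.getD j 0 : ℤ) := by
    intro j; simp only [hA, sum_take_succ']; omega
  have hrecB : ∀ j, B (j+1) = B j + (β.getD j 0 : ℤ) := by
    intro j; simp only [hB, sum_take_succ']; omega
  have hs0 : s 0 = 0 := by simp [hs, hS, hA, hB]
  have hsnn : ∀ j, 0 ≤ s j := by
    intro j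
    rcases Nat.eq_zero_or_pos j with rfl | hj
    · omega
    · have := (hαβ j hj).1
      simp only [hs, hS, hA, hB]
      omega
  have hO1 : ∀ j, (α.getD j 0 : ℤ) + A j + B j ≤ (lam.getD j 0 : ℤ) + 2 * S j := by
    intro j
    have := (hαβ (j+1) (by omega)).2
    simp only [Nat.add_sub_cancel] at this
    simp only [hS, hA, hB]; omega
  have hO2 : ∀ j, (β.getD j 0 : ℤ) + A j + B j ≤ (lam.getD j 0 : ℤ) + 2 * S j := by
    intro j
    have := (hβα (j+1) (by omega)).2
    simp only [Nat.add_sub_cancel] at this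
    simp only [hS, hA, hB]; omega
  have hbig : ∀ j, lam.length + (α.length + β.length) ≤ j → s j = 0 := by
    intro j hj
    simp only [hs, hS, hA, hB,
      List.take_of_length_le (show lam.length ≤ j by omega),
      List.take_of_length_le (show α.length ≤ j by omega),
      List.take_of_length_le (show β.length ≤ j by omega)]
    omega
  -- Step 1: some deficit exists
  have step1 : ∃ m, 1 ≤ s m := by
    by_contra hc
    push_neg at hc
    have hz : ∀ m, s m = 0 := fun m => le_antisymm (by have := hc m; omega) (hsnn m)
    apply hne2
    have hab : ∀ j, (α.getD j 0 : ℤ) + β.getD j 0 = 2 * lam.getD j 0 := by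
      intro j
      have h1 := hz j; have h2 := hz (j+1)
      have e1 := hrecS j; have e2 := hrecA j; have e3 := hrecB j
      simp only [hs] at h1 h2
      omega
    have haj : ∀ j, α.getD j 0 = lam.getD j 0 := by
      intro j
      have h1 := hO1 j; have h2 := hO2 j
      have h3 := hz j
      simp only [hs] at h3
      have := hab j
      omega
    have hbj : ∀ j, β.getD j 0 = lam.getD j 0 := by
      intro j
      have := hab j; have := haj j; omega
    exact ⟨ptn_ext hα hlam haj, ptn_ext hβ hlam hbj⟩
  -- Step 2: find a drop point of s
  have step2 : ∃ p, 1 ≤ p ∧ s (p+1) + 1 ≤ s p := by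
    obtain ⟨m, hm⟩ := step1
    have hm1 : 1 ≤ m := by
      rcases Nat.eq_zero_or_pos m with rfl | h
      · omega
      · exact h
    have key : ∀ k (m : ℕ), 1 ≤ m → 1 ≤ s m → s (m + k) = 0 →
        ∃ p, 1 ≤ p ∧ s (p+1) + 1 ≤ s p := by
      intro k
      induction k with
      | zero => intro m h1 h2 h3; simp at h3; omega
      | succ k ih =>
        intro m h1 h2 h3
        by_cases hc : 1 ≤ s (m+1)
        · exact ih (m+1) (by omega) hc (by rw [show m + 1 + k = m + (k+1) by omega]; exact h3)
        · have := hsnn (m+1)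
          exact ⟨m, h1, by omega⟩
    exact key (lam.length + (α.length + β.length)) m hm1 hm
      (hbig _ (by omega))
  -- Step 3: downward induction
  obtain ⟨p, hp1, hpd⟩ := step2
  clear step1 hne2 hsum2 hbig
  induction p using Nat.strong_induction_on with
  | _ p ih =>
    have habp : (α.getD p 0 : ℤ) + β.getD p 0 = 2 * lam.getD p 0 + (s p - s (p+1)) := by
      have e1 := hrecS p; have e2 := hrecA p; have e3 := hrecB p
      simp only [hs]
      omega
    by_cases hcase : lam.getD p 0 < lam.getD (p-1) 0
    · refine ⟨p, hp1, ?_, hcase, ?_⟩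
      · have h1 : 0 < lam.getD (p-1) 0 := by omega
        have := lt_length_of_getD_pos h1
        omega
      · have h1 : 1 ≤ s p := by have := hsnn (p+1); omega
        simp only [hs, hS, hA, hB] at h1
        omega
    · -- equal case: descend
      have heq : lam.getD (p-1) 0 = lam.getD p 0 := by
        have := getD_anti lam hlam.1 (show p - 1 ≤ p by omega)
        omega
      have ha' : (α.getD p 0 : ℤ) ≤ α.getD (p-1) 0 := by
        exact_mod_cast getD_anti α hα.1 (show p - 1 ≤ p by omega)
      have hb' : (β.getD p 0 : ℤ) ≤ β.getD (p-1) 0 := by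
        exact_mod_cast getD_anti β hβ.1 (show p - 1 ≤ p by omega)
      have hdown : s p + 1 ≤ s (p-1) := by
        have e1 : s p = s (p-1) + 2 * (lam.getD (p-1) 0 : ℤ)
            - α.getD (p-1) 0 - β.getD (p-1) 0 := by
          have h1 := hrecS (p-1); have h2 := hrecA (p-1); have h3 := hrecB (p-1)
          have hpp : p - 1 + 1 = p := by omega
          rw [hpp] at h1 h2 h3
          simp only [hs]
          omega
        have heqz : (lam.getD (p-1) 0 : ℤ) = lam.getD p 0 := by exact_mod_cast heq
        omega
      rcases Nat.lt_or_ge 1 p with hp2 | hp2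
      · exact ih (p-1) (by omega) (by omega) (by rw [show p - 1 + 1 = p by omega]; omega)
      · exfalso
        have : p = 1 := by omega
        subst this
        simp only [show (1:ℕ) - 1 = 0 from rfl] at hdown
        have := hsnn 1
        omega

lemma pair_eq {a b c d : List ℕ} (h : ({a, b} : Multiset (List ℕ)) = {c, d}) :
    (a = c ∧ b = d) ∨ (a = d ∧ b = c) := by
  rw [Multiset.insert_eq_cons, Multiset.insert_eq_cons, Multiset.cons_eq_cons] at h
  rcases h with ⟨h1, h2⟩ | ⟨h1, cs, h2, h3⟩
  · left
    exact ⟨h1, by simpa using h2⟩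
  · rw [Multiset.singleton_eq_cons_iff] at h2 h3
    right
    exact ⟨h3.1.symm, h2.1⟩

/-- If `{λ,±}` covers `Θ` in the didominance order on dipartitions of `n` (with `λ` a partition
of `n/2`), then `Θ = {θ, ω}` where, for some `1 ≤ p ≤ len λ` with `λ_p > λ_{p+1}`, `θ` is `λ`
with the `p`-th part decreased by one and `ω` is `λ` with the `(p+1)`-st part increased by one.
In particular `Θ` is an unordered pair of two distinct partitions. -/
theorem stmt11 (n : ℕ) (lam : List ℕ) (b : Bool) (hlam : IsPtn lam) (hsum : 2 * lam.sum = n)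
    (Θ : Dipart) (hΘ : Θ.Valid n)
    (hle : didom Θ (Dipart.signed lam b)) (hne : Θ ≠ Dipart.signed lam b)
    (hcov : ∀ Ω : Dipart, Ω.Valid n → didom Θ Ω → didom Ω (Dipart.signed lam b) →
      Ω = Θ ∨ Ω = Dipart.signed lam b) :
    ∃ p : ℕ, 1 ≤ p ∧ p ≤ lam.length ∧ lam.getD p 0 < lam.getD (p - 1) 0 ∧
      Θ = Dipart.pair
        {(lam.take (p - 1) ++ (lam.getD (p - 1) 0 - 1) :: lam.drop p).filter
            (fun x => decide (x ≠ 0)),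
         lam.take p ++ (lam.getD p 0 + 1) :: lam.drop (p + 1)} := by
    cases Θ with
  | signed mu b' =>
    have hle' : (mu = lam ∧ b' = b) ∨ (mu ≠ lam ∧ predD mu mu lam lam) := hle
    rcases hle' with ⟨rfl, rfl⟩ | ⟨hnemu, hpred⟩
    · exact absurd rfl hne
    · obtain ⟨hmuptn, hmusum⟩ := hΘ
      have hab : bidom mu mu lam lam := by rcases hpred.1 with h | h <;> exact h
      obtain ⟨p, hp1, hpL, hvw, hkey⟩ := descent lam mu mu hlam hmuptn hmuptn hab hab
        (by omega) (fun h => hnemu h.1)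
      set t1 := (lam.take (p-1) ++ (lam.getD (p-1) 0 - 1) :: lam.drop p).filter
        (fun x => decide (x ≠ 0)) with ht1
      set t2 := lam.take p ++ (lam.getD p 0 + 1) :: lam.drop (p+1) with ht2
      obtain ⟨hθptn, hωptn, hθsum, hωsum, g1lt, g1ge, g2le, g2gt⟩ :=
        cover_lists lam p hlam hp1 hpL hvw t1 t2 ht1 ht2
      have hΩval : Dipart.Valid n (Dipart.pair {t1, t2}) :=
        ⟨t1, t2, rfl, (by intro h; rw [h] at hθsum; omega), hθptn, hωptn, by omega⟩
      have hup : didom (Dipart.pair {t1, t2}) (Dipart.signed lam b) :=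
        ⟨t1, t2, rfl, Or.inl (bidom_up1 lam t1 t2 p g1lt g1ge g2le g2gt hp1),
          Or.inl (bidom_up2 lam t1 t2 p g1lt g1ge g2le g2gt hp1)⟩
      have hdn : didom (Dipart.signed mu b') (Dipart.pair {t1, t2}) :=
        ⟨t1, t2, rfl,
          Or.inr (bidom_dn lam t1 t2 p g1lt g1ge g2le g2gt mu mu hp1 hab hkey),
          Or.inr (bidom_dn lam t1 t2 p g1lt g1ge g2le g2gt mu mu hp1 hab hkey)⟩
      rcases hcov _ hΩval hdn hup with h | h
      · exact absurd h (by simp)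
      · exact absurd h (by simp)
  | pair s =>
    obtain ⟨l0, m0, hs0, hne0, hl0, hm0, hsum0⟩ := hΘ
    have hle' : ∃ l m, s = {l, m} ∧ predD l m lam lam := hle
    obtain ⟨al, be, hsab, hpred⟩ := hle'
    have hpq : (al = l0 ∧ be = m0) ∨ (al = m0 ∧ be = l0) := pair_eq (by rw [← hsab, hs0])
    obtain ⟨haptn, hbptn, hsumab, hneab⟩ :
        IsPtn al ∧ IsPtn be ∧ al.sum + be.sum = n ∧ al ≠ be := by
      rcases hpq with ⟨rfl, rfl⟩ | ⟨rfl, rfl⟩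
      · exact ⟨hl0, hm0, hsum0, hne0⟩
      · exact ⟨hm0, hl0, by omega, fun h => hne0 h.symm⟩
    have hab : bidom al be lam lam := by rcases hpred.1 with h | h <;> exact h
    have hba : bidom be al lam lam := by rcases hpred.2 with h | h <;> exact h
    have hne2 : ¬(al = lam ∧ be = lam) := fun h => hneab (h.1.trans h.2.symm)
    obtain ⟨p, hp1, hpL, hvw, hkey⟩ := descent lam al be hlam haptn hbptn hab hba
      (by omega) hne2
    set t1 := (lam.take (p-1) ++ (lam.getD (p-1) 0 - 1) :: lam.drop p).filter
      (fun x => decide (x ≠ 0)) with ht1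
    set t2 := lam.take p ++ (lam.getD p 0 + 1) :: lam.drop (p+1) with ht2
    obtain ⟨hθptn, hωptn, hθsum, hωsum, g1lt, g1ge, g2le, g2gt⟩ :=
      cover_lists lam p hlam hp1 hpL hvw t1 t2 ht1 ht2
    have hΩval : Dipart.Valid n (Dipart.pair {t1, t2}) :=
      ⟨t1, t2, rfl, (by intro h; rw [h] at hθsum; omega), hθptn, hωptn, by omega⟩
    have hup : didom (Dipart.pair {t1, t2}) (Dipart.signed lam b) :=
      ⟨t1, t2, rfl, Or.inl (bidom_up1 lam t1 t2 p g1lt g1ge g2le g2gt hp1),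
        Or.inl (bidom_up2 lam t1 t2 p g1lt g1ge g2le g2gt hp1)⟩
    have hdn : didom (Dipart.pair s) (Dipart.pair {t1, t2}) :=
      ⟨al, be, t1, t2, hsab, rfl,
        Or.inr (bidom_dn lam t1 t2 p g1lt g1ge g2le g2gt al be hp1 hab hkey),
        Or.inr (bidom_dn lam t1 t2 p g1lt g1ge g2le g2gt be al hp1 hba (by omega))⟩
    rcases hcov _ hΩval hdn hup with h | h
    · refine ⟨p, hp1, hpL, hvw, ?_⟩
      rw [← ht1, ← ht2]
      exact h.symm
    · exact absurd h (by simp)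
end

section
/- Let λ and μ be partitions with |λ| + |μ| = n, and suppose x ∈ V_{(λ,μ)}^B ∖ V_{(μ,λ)}^B. Then at least one coordinate of x is zero. -/
open MvPolynomial

/-- If `x ∈ V_{(l,m)}^B ∖ V_{(m,l)}^B` then some coordinate of `x` is zero. -/
theorem stmt16 (K : Type*) [Field K] [CharZero K] (n : ℕ) (l m : List ℕ)
    (hl : IsPtn l) (hm : IsPtn m) (hsum : l.sum + m.sum = n)
    (x : Fin n → K) (hx : x ∈ varB K n l m) (hx' : x ∉ varB K n m l) :
    ∃ i : Fin n, x i = 0 := by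
  by_contra h
  push_neg at h
  apply hx'
  intro f hf
  have key : IdealB K n m l ≤ RingHom.ker (MvPolynomial.eval x) := by
    rw [IdealB, Ideal.span_le]
    rintro f ⟨tT, tS, hbt, rfl⟩
    obtain ⟨h1, h2, h3, h4⟩ := hbt
    have hbt' : IsBitableau n l m tS tT :=
      ⟨h2, h1, fun p q hp hq => (h3 q p hq hp).symm, fun k => (h4 k).symm⟩
    have hgen : speB K n l m tS tT ∈ IdealB K n l m :=
      Ideal.subset_span ⟨tS, tT, hbt', rfl⟩
    have h0 := hx _ hgen
    have hpv : ∀ (ll : List ℕ) (t : ℕ × ℕ → Fin n),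
        MvPolynomial.eval x (prodVars K n ll t) ≠ 0 := by
      intro ll t
      rw [prodVars]
      simp only [map_prod, MvPolynomial.eval_X]
      exact Finset.prod_ne_zero_iff.mpr fun c _ =>
        Finset.prod_ne_zero_iff.mpr fun i _ => h _
    rw [speB, map_mul, map_mul] at h0
    have h00 : MvPolynomial.eval x (speSsq K n l tS) *
        MvPolynomial.eval x (speSsq K n m tT) = 0 := by
      rcases mul_eq_zero.mp h0 with h' | h'
      · exact h'
      · exact absurd h' (hpv m tT)
    simp only [SetLike.mem_coe, RingHom.mem_ker]
    rw [speB, map_mul, map_mul, mul_comm (MvPolynomial.eval x (speSsq K n m tT)),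
      h00, zero_mul]
  exact key hf
end

section
/- Let K be a field of characteristic zero and n = 5. There exists no family (O(Λ))_{Λ ∈ 𝒟₅} of pairwise disjoint subsets of K⁵ whose union is K⁵ such that for every dipartition Θ ∈ 𝒟₅ one has V_Θ^D = ⋃_{Λ ∈ 𝒟₅, Λ ⋬_D Θ} O(Λ). -/
open MvPolynomial

section Aux

lemma take_one_sum (l : List ℕ) : (l.take 1).sum = l.getD 0 0 := by
  cases l <;> simp

lemma pair_eq_pair {α : Type*} {a b c d : α} (h : ({a, b} : Multiset α) = {c, d}) :
    (a = c ∧ b = d) ∨ (a = d ∧ b = c) := by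
  have hc : c ∈ ({a, b} : Multiset α) := by rw [h]; simp
  simp only [Multiset.insert_eq_cons, Multiset.mem_cons, Multiset.mem_singleton] at hc
  rcases hc with rfl | rfl
  · left
    refine ⟨rfl, ?_⟩
    have h2 := (Multiset.cons_inj_right c).mp h
    simpa using h2
  · right
    refine ⟨?_, rfl⟩
    rw [show ({a, c} : Multiset α) = a ::ₘ c ::ₘ 0 from rfl, Multiset.cons_swap] at h
    have h2 := (Multiset.cons_inj_right c).mp h
    simpa using h2

lemma colLen_cons_pos {a : ℕ} {t : List ℕ} {c : ℕ} (h : c < a) :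
    colLen (a :: t) c = colLen t c + 1 := by
  simp [colLen, List.countP_cons, h]

lemma colLen_iff {l : List ℕ} (hl : l.Pairwise (· ≥ ·)) (i c : ℕ) :
    i < colLen l c ↔ c < l.getD i 0 := by
  induction l generalizing i with
  | nil => simp [colLen]
  | cons a t ih =>
    rw [List.pairwise_cons] at hl
    by_cases hca : c < a
    · rw [colLen_cons_pos hca]
      cases i with
      | zero => simpa
      | succ i =>
        have h2 := ih hl.2 i
        rw [List.getD_cons_succ]
        omega
    · have hz : colLen t c = 0 := by
        rw [colLen, List.countP_eq_zero]
        intro x hx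
        simp only [decide_eq_true_eq]
        have := hl.1 x hx
        omega
      have hz2 : colLen (a :: t) c = 0 := by
        simp only [colLen, List.countP_cons, decide_eq_true_eq, hca, if_false] at hz ⊢
        omega
      rw [hz2]
      cases i with
      | zero => simp; omega
      | succ i =>
        simp only [List.getD_cons_succ]
        constructor
        · omega
        · intro hgd
          exfalso
          rcases lt_or_ge i t.length with hlen | hlen
          · have hmem : t.getD i 0 ∈ t := by
              rw [List.getD_eq_getElem _ _ hlen]; exact t.getElem_mem _
            have := hl.1 _ hmem
            omega
          · rw [List.getD_eq_default _ _ hlen] at hgd; omega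

lemma sum_eq_colLen {l : List ℕ} (h2 : ∀ a ∈ l, a ≤ 2) :
    l.sum = colLen l 0 + colLen l 1 := by
  induction l with
  | nil => simp [colLen]
  | cons a t ih =>
    have ha := h2 a (by simp)
    have ht := ih (fun b hb => h2 b (by simp [hb]))
    simp only [List.sum_cons, colLen, List.countP_cons, decide_eq_true_eq] at *
    interval_cases a <;> simp <;> omega

lemma mem_le_head {l : List ℕ} (hl : l.Pairwise (· ≥ ·)) {a : ℕ} (ha : a ∈ l) :
    a ≤ l.getD 0 0 := by
  cases l with
  | nil => simp at ha
  | cons b t =>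
    rw [List.pairwise_cons] at hl
    simp only [List.mem_cons] at ha
    rcases ha with rfl | ha
    · simp
    · simpa using hl.1 a ha

lemma colLen_mono (l : List ℕ) : colLen l 1 ≤ colLen l 0 := by
  apply List.countP_mono_left
  intro a _ h
  simp only [decide_eq_true_eq] at *
  omega

end Aux
section Aux2

variable {K : Type*} [Field K]

/-- the test point (1,1,1,1,0) -/
noncomputable def xpt (K : Type*) [Field K] : Fin 5 → K := fun i => if i = 4 then 0 else 1

lemma xpt_eq_zero : xpt K 4 = 0 := by simp [xpt]

lemma xpt_ne_four {i : Fin 5} (h : i ≠ 4) : xpt K i = 1 := by simp [xpt, h]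

lemma eval_speSsq_zero (x : Fin 5 → K) (l : List ℕ) (t : ℕ × ℕ → Fin 5)
    (c i j : ℕ) (hc : c < l.getD 0 0) (hi : i < colLen l c) (hj : j < colLen l c)
    (hij : i < j) (hx : x (t (i, c)) ^ 2 = x (t (j, c)) ^ 2) :
    MvPolynomial.eval x (speSsq K 5 l t) = 0 := by
  unfold speSsq
  rw [map_prod]
  apply Finset.prod_eq_zero (Finset.mem_range.mpr hc)
  rw [map_prod]
  apply Finset.prod_eq_zero (Finset.mem_range.mpr hi)
  rw [map_prod]
  apply Finset.prod_eq_zero (Finset.mem_range.mpr hj)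
  rw [if_pos hij]
  simp [hx]

lemma eval_prodVars_zero (x : Fin 5 → K) (l : List ℕ) (t : ℕ × ℕ → Fin 5)
    (c i : ℕ) (hc : c < l.getD 0 0) (hi : i < colLen l c) (hx : x (t (i, c)) = 0) :
    MvPolynomial.eval x (prodVars K 5 l t) = 0 := by
  unfold prodVars
  rw [map_prod]
  apply Finset.prod_eq_zero (Finset.mem_range.mpr hc)
  rw [map_prod]
  apply Finset.prod_eq_zero (Finset.mem_range.mpr hi)
  simp [hx]

/-- The main vanishing lemma at the point (1,1,1,1,0). -/
lemma eval_speB_xpt_zero (l m : List ℕ) (hl : IsPtn l) (hm : IsPtn m)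
    (tT tS : ℕ × ℕ → Fin 5) (hbt : IsBitableau 5 l m tT tS)
    (hcond : 2 ≤ colLen m 0 ∨ 3 ≤ colLen l 0 ∨ (2 ≤ colLen l 0 ∧ 2 ≤ colLen l 1)) :
    MvPolynomial.eval (xpt K) (speB K 5 l m tT tS) = 0 := by
  obtain ⟨hTinj, hSinj, -, -⟩ := hbt
  unfold speB
  rw [map_mul, map_mul]
  rcases hcond with hc1 | hc2 | ⟨hc3a, hc3b⟩
  · -- column 0 of m has ≥ 2 cells
    have h0 : (0 : ℕ) < colLen m 0 := by omega
    have h1 : (1 : ℕ) < colLen m 0 := hc1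
    have hcell0 : IsCell m (0, 0) := (colLen_iff hm.1 0 0).mp h0
    have hcell1 : IsCell m (1, 0) := (colLen_iff hm.1 1 0).mp h1
    have hmc : (0 : ℕ) < m.getD 0 0 := hcell0
    by_cases h4 : tS (0, 0) = 4 ∨ tS (1, 0) = 4
    · have : MvPolynomial.eval (xpt K) (prodVars K 5 m tS) = 0 := by
        rcases h4 with h4 | h4
        · exact eval_prodVars_zero _ m tS 0 0 hmc h0 (by rw [h4]; exact xpt_eq_zero)
        · exact eval_prodVars_zero _ m tS 0 1 hmc h1 (by rw [h4]; exact xpt_eq_zero)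
      rw [this]; ring
    · push_neg at h4
      have : MvPolynomial.eval (xpt K) (speSsq K 5 m tS) = 0 := by
        apply eval_speSsq_zero _ m tS 0 0 1 hmc h0 h1 one_pos
        rw [xpt_ne_four h4.1, xpt_ne_four h4.2]
      rw [this]; ring
  · -- column 0 of l has ≥ 3 cells
    have h0 : (0 : ℕ) < colLen l 0 := by omega
    have h1 : (1 : ℕ) < colLen l 0 := by omega
    have h2 : (2 : ℕ) < colLen l 0 := hc2
    have hcell0 : IsCell l (0, 0) := (colLen_iff hl.1 0 0).mp h0
    have hcell1 : IsCell l (1, 0) := (colLen_iff hl.1 1 0).mp h1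
    have hcell2 : IsCell l (2, 0) := (colLen_iff hl.1 2 0).mp h2
    have hlc : (0 : ℕ) < l.getD 0 0 := hcell0
    have hne01 : tT (0, 0) ≠ tT (1, 0) := fun h => by
      have := hTinj _ _ hcell0 hcell1 h; simp [Prod.ext_iff] at this
    have hne02 : tT (0, 0) ≠ tT (2, 0) := fun h => by
      have := hTinj _ _ hcell0 hcell2 h; simp [Prod.ext_iff] at this
    have hne12 : tT (1, 0) ≠ tT (2, 0) := fun h => by
      have := hTinj _ _ hcell1 hcell2 h; simp [Prod.ext_iff] at this
    have : MvPolynomial.eval (xpt K) (speSsq K 5 l tT) = 0 := by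
      by_cases ha : tT (0, 0) = 4
      · apply eval_speSsq_zero _ l tT 0 1 2 hlc h1 h2 one_lt_two
        rw [xpt_ne_four (fun h => hne01 (ha.trans h.symm)),
            xpt_ne_four (fun h => hne02 (ha.trans h.symm))]
      · by_cases hb : tT (1, 0) = 4
        · apply eval_speSsq_zero _ l tT 0 0 2 hlc h0 h2 two_pos
          rw [xpt_ne_four ha, xpt_ne_four (fun h => hne12 (hb.trans h.symm))]
        · apply eval_speSsq_zero _ l tT 0 0 1 hlc h0 h1 one_pos
          rw [xpt_ne_four ha, xpt_ne_four hb]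
    rw [this]; ring
  · -- columns 0 and 1 of l each have ≥ 2 cells
    have h00 : (0 : ℕ) < colLen l 0 := by omega
    have h10 : (1 : ℕ) < colLen l 0 := hc3a
    have h01 : (0 : ℕ) < colLen l 1 := by omega
    have h11 : (1 : ℕ) < colLen l 1 := hc3b
    have hcell00 : IsCell l (0, 0) := (colLen_iff hl.1 0 0).mp h00
    have hcell10 : IsCell l (1, 0) := (colLen_iff hl.1 1 0).mp h10
    have hcell01 : IsCell l (0, 1) := (colLen_iff hl.1 0 1).mp h01
    have hcell11 : IsCell l (1, 1) := (colLen_iff hl.1 1 1).mp h11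
    have hlc0 : (0 : ℕ) < l.getD 0 0 := hcell00
    have hlc1 : (1 : ℕ) < l.getD 0 0 := hcell01
    have : MvPolynomial.eval (xpt K) (speSsq K 5 l tT) = 0 := by
      by_cases ha : tT (0, 0) ≠ 4 ∧ tT (1, 0) ≠ 4
      · apply eval_speSsq_zero _ l tT 0 0 1 hlc0 h00 h10 one_pos
        rw [xpt_ne_four ha.1, xpt_ne_four ha.2]
      · have hb : tT (0, 1) ≠ 4 ∧ tT (1, 1) ≠ 4 := by
          push_neg at ha
          constructor
          · intro h
            rcases Classical.em (tT (0,0) = 4) with h4 | h4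
            · exact absurd (hTinj _ _ hcell00 hcell01 (h4.trans h.symm)) (by simp [Prod.ext_iff])
            · exact absurd (hTinj _ _ hcell10 hcell01 ((ha h4).trans h.symm)) (by simp [Prod.ext_iff])
          · intro h
            rcases Classical.em (tT (0,0) = 4) with h4 | h4
            · exact absurd (hTinj _ _ hcell00 hcell11 (h4.trans h.symm)) (by simp [Prod.ext_iff])
            · exact absurd (hTinj _ _ hcell10 hcell11 ((ha h4).trans h.symm)) (by simp [Prod.ext_iff])
        apply eval_speSsq_zero _ l tT 1 0 1 hlc1 h01 h11 one_pos
        rw [xpt_ne_four hb.1, xpt_ne_four hb.2]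
    rw [this]; ring

end Aux2
section Aux3

variable {K : Type*} [Field K]

def tT1 : ℕ × ℕ → Fin 5 := fun p => if p = (0,0) then 0 else if p = (1,0) then 4 else 1
def tS1 : ℕ × ℕ → Fin 5 := fun p => if p = (0,0) then 2 else 3
def tT2 : ℕ × ℕ → Fin 5 := fun p => if p = (0,0) then 0 else 4
def tS2 : ℕ × ℕ → Fin 5 := fun p => if p = (0,0) then 1 else if p = (0,1) then 2 else 3

lemma cell21 (p : ℕ × ℕ) : IsCell [2,1] p ↔ p = (0,0) ∨ p = (0,1) ∨ p = (1,0) := by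
  obtain ⟨a, b⟩ := p
  show b < [2,1].getD a 0 ↔ _
  rcases a with _ | _ | a <;> simp [Prod.ext_iff, List.getD] <;> omega

lemma cell2 (p : ℕ × ℕ) : IsCell [2] p ↔ p = (0,0) ∨ p = (0,1) := by
  obtain ⟨a, b⟩ := p
  show b < [2].getD a 0 ↔ _
  rcases a with _ | a <;> simp [Prod.ext_iff, List.getD] <;> omega

lemma cell11 (p : ℕ × ℕ) : IsCell [1,1] p ↔ p = (0,0) ∨ p = (1,0) := by
  obtain ⟨a, b⟩ := p
  show b < [1,1].getD a 0 ↔ _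
  rcases a with _ | _ | a <;> simp [Prod.ext_iff, List.getD] <;> omega

lemma cell3 (p : ℕ × ℕ) : IsCell [3] p ↔ p = (0,0) ∨ p = (0,1) ∨ p = (0,2) := by
  obtain ⟨a, b⟩ := p
  show b < [3].getD a 0 ↔ _
  rcases a with _ | a <;> simp [Prod.ext_iff, List.getD] <;> omega

lemma hbt1 : IsBitableau 5 [2,1] [2] tT1 tS1 := by
  refine ⟨?_, ?_, ?_, ?_⟩
  · intro p q hp hq heq
    rw [cell21] at hp hq
    rcases hp with rfl | rfl | rfl <;> rcases hq with rfl | rfl | rfl <;>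
      first | rfl | (exfalso; revert heq; decide)
  · intro p q hp hq heq
    rw [cell2] at hp hq
    rcases hp with rfl | rfl <;> rcases hq with rfl | rfl <;>
      first | rfl | (exfalso; revert heq; decide)
  · intro p q hp hq heq
    rw [cell21] at hp
    rw [cell2] at hq
    rcases hp with rfl | rfl | rfl <;> rcases hq with rfl | rfl <;> revert heq <;> decide
  · intro k
    fin_cases k
    · exact Or.inl ⟨(0,0), (cell21 _).mpr (by tauto), by decide⟩
    · exact Or.inl ⟨(0,1), (cell21 _).mpr (by tauto), by decide⟩
    · exact Or.inr ⟨(0,0), (cell2 _).mpr (by tauto), by decide⟩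
    · exact Or.inr ⟨(0,1), (cell2 _).mpr (by tauto), by decide⟩
    · exact Or.inl ⟨(1,0), (cell21 _).mpr (by tauto), by decide⟩

lemma hbt2 : IsBitableau 5 [1,1] [3] tT2 tS2 := by
  refine ⟨?_, ?_, ?_, ?_⟩
  · intro p q hp hq heq
    rw [cell11] at hp hq
    rcases hp with rfl | rfl <;> rcases hq with rfl | rfl <;>
      first | rfl | (exfalso; revert heq; decide)
  · intro p q hp hq heq
    rw [cell3] at hp hq
    rcases hp with rfl | rfl | rfl <;> rcases hq with rfl | rfl | rfl <;>
      first | rfl | (exfalso; revert heq; decide)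
  · intro p q hp hq heq
    rw [cell11] at hp
    rw [cell3] at hq
    rcases hp with rfl | rfl <;> rcases hq with rfl | rfl | rfl <;> revert heq <;> decide
  · intro k
    fin_cases k
    · exact Or.inl ⟨(0,0), (cell11 _).mpr (by tauto), by decide⟩
    · exact Or.inr ⟨(0,0), (cell3 _).mpr (by tauto), by decide⟩
    · exact Or.inr ⟨(0,1), (cell3 _).mpr (by tauto), by decide⟩
    · exact Or.inr ⟨(0,2), (cell3 _).mpr (by tauto), by decide⟩
    · exact Or.inl ⟨(1,0), (cell11 _).mpr (by tauto), by decide⟩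

lemma eval_nonvanish1 : MvPolynomial.eval (xpt K) (speB K 5 [2,1] [2] tT1 tS1) = 1 := by
  have c0 : colLen [2,1] 0 = 2 := by decide
  have c1 : colLen [2,1] 1 = 1 := by decide
  have d0 : colLen [2] 0 = 1 := by decide
  have d1 : colLen [2] 1 = 1 := by decide
  unfold speB speSsq prodVars
  simp [c0, c1, d0, d1, Finset.prod_range_succ, tT1, tS1, xpt, Prod.ext_iff]

lemma eval_nonvanish2 : MvPolynomial.eval (xpt K) (speB K 5 [1,1] [3] tT2 tS2) = 1 := by
  have c0 : colLen [1,1] 0 = 2 := by decide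
  have d0 : colLen [3] 0 = 1 := by decide
  have d1 : colLen [3] 1 = 1 := by decide
  have d2 : colLen [3] 2 = 1 := by decide
  unfold speB speSsq prodVars
  simp [c0, d0, d1, d2, Finset.prod_range_succ, tT2, tS2, xpt, Prod.ext_iff]

end Aux3
section Aux4

lemma bidom_refl (l m : List ℕ) : bidom l m l m := fun _ _ => ⟨le_refl _, le_refl _⟩

lemma predD_swap_right {l m t w : List ℕ} (h : predD l m t w) : predD l m w t :=
  ⟨h.1.symm, h.2.symm⟩

lemma predD_swap_left {l m t w : List ℕ} (h : predD l m t w) : predD m l t w :=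
  ⟨h.2, h.1⟩

lemma predD_of_didom {a b t w : List ℕ} (h : didom (.pair {a, b}) (.pair {t, w})) :
    predD a b t w := by
  obtain ⟨l, m, t', w', hs, hs', hp⟩ := h
  rcases pair_eq_pair hs with ⟨rfl, rfl⟩ | ⟨rfl, rfl⟩ <;>
    rcases pair_eq_pair hs' with ⟨rfl, rfl⟩ | ⟨rfl, rfl⟩
  · exact hp
  · exact predD_swap_right hp
  · exact predD_swap_left hp
  · exact predD_swap_left (predD_swap_right hp)

lemma bidom_j1 {l m t w : List ℕ} (h : bidom l m t w) :
    l.getD 0 0 + m.getD 0 0 ≤ t.getD 0 0 + w.getD 0 0 ∧ l.getD 0 0 ≤ t.getD 0 0 := by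
  have h1 := h 1 le_rfl
  constructor
  · have := h1.1
    simpa [take_one_sum] using this
  · have := h1.2
    simpa using this

lemma bidom_j2 {l m t w : List ℕ} (h : bidom l m t w) :
    l.getD 1 0 + (l.getD 0 0 + m.getD 0 0) ≤ t.getD 1 0 + (t.getD 0 0 + w.getD 0 0) := by
  have h2 := (h 2 (by norm_num)).2
  simpa [take_one_sum] using h2

lemma claimNum (sl sm n0l n1l n0m n1m al bl am : ℕ)
    (h1 : sl = n0l + n1l) (h2 : sm = n0m + n1m) (hsum : sl + sm = 5)
    (hal : al ≤ 2) (ham : am ≤ 2)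
    (h3 : 0 < n1l ↔ 1 < al) (h4 : 1 < n0l ↔ 0 < bl) (h5 : 1 < n1l ↔ 1 < bl)
    (h6 : 0 < n1m ↔ 1 < am)
    (hth : al ≤ 1 ∨ bl + al + am ≤ 4)
    (m1 : n1l ≤ n0l) (m2 : n1m ≤ n0m) :
    2 ≤ n0m ∨ 3 ≤ n0l ∨ (2 ≤ n0l ∧ 2 ≤ n1l) := by omega

end Aux4
/-- For `n = 5` there is no set partition `(O(Λ))_{Λ ∈ 𝒟₅}` of `K⁵` such that every `D`-Specht
variety is the union of the `O(Λ)` over the dipartitions `Λ` not didominated by `Θ`. -/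
theorem stmt18 (K : Type*) [Field K] [CharZero K] :
    ¬ ∃ O : Dipart → Set (Fin 5 → K),
      (∀ Λ₁ Λ₂ : Dipart, Λ₁.Valid 5 → Λ₂.Valid 5 → Λ₁ ≠ Λ₂ → Disjoint (O Λ₁) (O Λ₂)) ∧
      (∀ x : Fin 5 → K, ∃ Λ : Dipart, Λ.Valid 5 ∧ x ∈ O Λ) ∧
      (∀ Θ : Dipart, Θ.Valid 5 →
        varD K 5 Θ = {x | ∃ Λ : Dipart, Λ.Valid 5 ∧ ¬ didom Λ Θ ∧ x ∈ O Λ}) := by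
  rintro ⟨O, hdisj, hcover, hvar⟩
  obtain ⟨Λ, hΛv, hxΛ⟩ := hcover (xpt K)
  have key : ∀ Θ : Dipart, Θ.Valid 5 → (xpt K ∈ varD K 5 Θ ↔ ¬ didom Λ Θ) := by
    intro Θ hΘ
    rw [hvar Θ hΘ]
    simp only [Set.mem_setOf_eq]
    constructor
    · rintro ⟨Λ', hv', hnd, hx'⟩
      rcases eq_or_ne Λ' Λ with rfl | hne
      · exact hnd
      · exact absurd hxΛ (Set.disjoint_left.mp (hdisj Λ' Λ hv' hΛv hne) hx')
    · intro hnd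
      exact ⟨Λ, hΛv, hnd, hxΛ⟩
  have hΘ1v : Dipart.Valid 5 (.pair {[2,1], [2]}) := by
    refine ⟨[2,1], [2], rfl, by decide, ?_, ?_, by decide⟩ <;> unfold IsPtn <;> decide
  have hΘ2v : Dipart.Valid 5 (.pair {[3], [1,1]}) := by
    refine ⟨[3], [1,1], rfl, by decide, ?_, ?_, by decide⟩ <;> unfold IsPtn <;> decide
  have hx1 : xpt K ∉ varD K 5 (.pair {[2,1], [2]}) := by
    intro hmem
    have hgen : speB K 5 [2,1] [2] tT1 tS1 ∈ IdealD K 5 (.pair {[2,1], [2]}) :=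
      Ideal.subset_span ⟨[2,1], [2], tT1, tS1, rfl, hbt1, rfl⟩
    have := hmem _ hgen
    rw [eval_nonvanish1] at this
    exact one_ne_zero this
  have hx2 : xpt K ∉ varD K 5 (.pair {[3], [1,1]}) := by
    intro hmem
    have hgen : speB K 5 [1,1] [3] tT2 tS2 ∈ IdealD K 5 (.pair {[3], [1,1]}) :=
      Ideal.subset_span ⟨[1,1], [3], tT2, tS2, Multiset.cons_swap _ _ _, hbt2, rfl⟩
    have := hmem _ hgen
    rw [eval_nonvanish2] at this
    exact one_ne_zero this
  have hd1 : didom Λ (.pair {[2,1], [2]}) := by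
    by_contra h
    exact hx1 ((key _ hΘ1v).mpr h)
  have hd2 : didom Λ (.pair {[3], [1,1]}) := by
    by_contra h
    exact hx2 ((key _ hΘ2v).mpr h)
  -- Λ must be a pair
  cases Λ with
  | signed l b =>
      obtain ⟨-, hsum⟩ := hΛv
      omega
  | pair s =>
      obtain ⟨lam, mu, rfl, hne, hplam, hpmu, hsum⟩ := hΛv
      have hΛv' : Dipart.Valid 5 (.pair {lam, mu}) := ⟨lam, mu, rfl, hne, hplam, hpmu, hsum⟩
      have hrefl : didom (.pair {lam, mu}) (.pair {lam, mu}) :=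
        ⟨lam, mu, lam, mu, rfl, rfl, Or.inl (bidom_refl _ _), Or.inr (bidom_refl _ _)⟩
      have hnotmem : xpt K ∉ varD K 5 (.pair {lam, mu}) := fun hmem =>
        ((key _ hΛv').mp hmem) hrefl
      -- extract numeric facts
      have hP1 : predD lam mu [2,1] [2] := predD_of_didom hd1
      have hP2 : predD lam mu [3] [1,1] := predD_of_didom hd2
      have hal : lam.getD 0 0 ≤ 2 := by
        rcases hP1.1 with h | h <;> have := (bidom_j1 h).2 <;> simpa using this
      have ham : mu.getD 0 0 ≤ 2 := by
        rcases hP1.2 with h | h <;> have := (bidom_j1 h).2 <;> simpa using this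
      have hθl : lam.getD 0 0 ≤ 1 ∨
          lam.getD 1 0 + lam.getD 0 0 + mu.getD 0 0 ≤ 4 := by
        rcases hP2.1 with h | h
        · right
          have := bidom_j2 h
          simp only [show ([3] : List ℕ).getD 1 0 = 0 from rfl,
            show ([3] : List ℕ).getD 0 0 = 3 from rfl,
            show ([1,1] : List ℕ).getD 0 0 = 1 from rfl] at this
          omega
        · left
          have := (bidom_j1 h).2
          simpa using this
      have hθm : mu.getD 0 0 ≤ 1 ∨
          mu.getD 1 0 + mu.getD 0 0 + lam.getD 0 0 ≤ 4 := by
        rcases hP2.2 with h | h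
        · right
          have := bidom_j2 h
          simp only [show ([3] : List ℕ).getD 1 0 = 0 from rfl,
            show ([3] : List ℕ).getD 0 0 = 3 from rfl,
            show ([1,1] : List ℕ).getD 0 0 = 1 from rfl] at this
          omega
        · left
          have := (bidom_j1 h).2
          simpa using this
      have hsl : lam.sum = colLen lam 0 + colLen lam 1 :=
        sum_eq_colLen (fun a ha => le_trans (mem_le_head hplam.1 ha) hal)
      have hsm : mu.sum = colLen mu 0 + colLen mu 1 :=
        sum_eq_colLen (fun a ha => le_trans (mem_le_head hpmu.1 ha) ham)
      have bl1 : 0 < colLen lam 1 ↔ 1 < lam.getD 0 0 := colLen_iff hplam.1 0 1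
      have bl2 : 1 < colLen lam 0 ↔ 0 < lam.getD 1 0 := colLen_iff hplam.1 1 0
      have bl3 : 1 < colLen lam 1 ↔ 1 < lam.getD 1 0 := colLen_iff hplam.1 1 1
      have bm1 : 0 < colLen mu 1 ↔ 1 < mu.getD 0 0 := colLen_iff hpmu.1 0 1
      have bm2 : 1 < colLen mu 0 ↔ 0 < mu.getD 1 0 := colLen_iff hpmu.1 1 0
      have bm3 : 1 < colLen mu 1 ↔ 1 < mu.getD 1 0 := colLen_iff hpmu.1 1 1
      have hcond1 : 2 ≤ colLen mu 0 ∨ 3 ≤ colLen lam 0 ∨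
          (2 ≤ colLen lam 0 ∧ 2 ≤ colLen lam 1) :=
        claimNum lam.sum mu.sum _ _ _ _ _ _ _ hsl hsm hsum hal ham bl1 bl2 bl3 bm1 hθl
          (colLen_mono lam) (colLen_mono mu)
      have hcond2 : 2 ≤ colLen lam 0 ∨ 3 ≤ colLen mu 0 ∨
          (2 ≤ colLen mu 0 ∧ 2 ≤ colLen mu 1) :=
        claimNum mu.sum lam.sum _ _ _ _ _ _ _ hsm hsl (by omega) ham hal bm1 bm2 bm3 bl1 hθm
          (colLen_mono mu) (colLen_mono lam)
      apply hnotmem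
      intro f hf
      have hspan : IdealD K 5 (.pair {lam, mu}) ≤
          RingHom.ker (MvPolynomial.eval (xpt K)) := by
        rw [show IdealD K 5 (.pair {lam, mu}) = Ideal.span
            {f | ∃ l m tT tS, ({lam, mu} : Multiset (List ℕ)) = {l, m} ∧
              IsBitableau 5 l m tT tS ∧ f = speB K 5 l m tT tS} from rfl]
        apply Ideal.span_le.mpr
        rintro g ⟨l, m, tT, tS, hs, hbt, rfl⟩
        rw [SetLike.mem_coe, RingHom.mem_ker]
        rcases pair_eq_pair hs with ⟨rfl, rfl⟩ | ⟨rfl, rfl⟩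
        · exact eval_speB_xpt_zero _ _ hplam hpmu tT tS hbt hcond1
        · exact eval_speB_xpt_zero _ _ hpmu hplam tT tS hbt hcond2
      exact RingHom.mem_ker.mp (hspan hf)
end
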